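/- Let x ≤ w in S_n (Bruhat order) and set r(p) = rk_x(p) − rk_w(p) ≥ 0. If p, q are points with p < q componentwise (or q < p), r(p) = r(q) = 0, and d_w(p,q) = 0, then d_x(p,q) = 0 and r vanishes at both corner points (i,j') and (i',j), where p = (i,j), q = (i',j'). -/

import Mathlib

open Equiv

/-- Rank function: `rk w i j = #{u = 1,...,i : w(u) ≤ j}` (1-based via `Fin`). -/
def rk {n : ℕ} (w : Equiv.Perm (Fin n)) (i j : ℕ) : ℕ :=
  (Finset.univ.filter (fun u : Fin n => u.val + 1 ≤ i ∧ (w u).val + 1 ≤ j)).card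

/-- Coxeter length = number of inversions. -/
def len {n : ℕ} (w : Equiv.Perm (Fin n)) : ℕ :=
  (Finset.univ.filter (fun p : Fin n × Fin n => p.1 < p.2 ∧ w p.2 < w p.1)).card

/-- A transposition. -/
def IsTransposition {n : ℕ} (t : Equiv.Perm (Fin n)) : Prop :=
  ∃ i j : Fin n, i ≠ j ∧ t = Equiv.swap i j

/-- Bruhat order: generated by `x → x·t` for transpositions `t` increasing the length. -/
def bruhatLE {n : ℕ} : Equiv.Perm (Fin n) → Equiv.Perm (Fin n) → Prop :=
  Relation.ReflTransGen (fun x y => ∃ t, IsTransposition t ∧ y = x * t ∧ len x < len y)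

/-- Strict Bruhat order. -/
def bruhatLT {n : ℕ} (x y : Equiv.Perm (Fin n)) : Prop := bruhatLE x y ∧ x ≠ y

/-- Difference function `d_w(p,p')`. -/
def dOf {n : ℕ} (w : Equiv.Perm (Fin n)) (p q : ℕ × ℕ) : ℤ :=
  (rk w p.1 p.2 : ℤ) + rk w q.1 q.2 - rk w p.1 q.2 - rk w q.1 p.2

/-- Strictly comparable points: `(i'−i)(j'−j) > 0`. -/
def SCmp (p q : ℕ × ℕ) : Prop := (p.1 < q.1 ∧ p.2 < q.2) ∨ (q.1 < p.1 ∧ q.2 < p.2)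

/-- Corners of the rectangle spanned by `p`, `q`. -/
lemma len_mul_swap_le {n : ℕ} (x : Perm (Fin n)) (a b : Fin n) (hab : a < b)
    (hx : x b < x a) : len (x * Equiv.swap a b) ≤ len x := by
  classical
  set s := Equiv.swap a b with hs
  unfold len
  apply Finset.card_le_card_of_injOn
      (fun p : Fin n × Fin n => if s p.1 < s p.2 then (s p.1, s p.2) else p)
  · rintro ⟨u, v⟩ hp
    replace hp : (u, v) ∈ Finset.univ.filter (fun p : Fin n × Fin n => p.1 < p.2 ∧ (x * s) p.2 < (x * s) p.1) := hp
    replace hp : u < v ∧ x (s v) < x (s u) := (Finset.mem_filter.mp hp).2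
    obtain ⟨huv, hinv⟩ := hp
    dsimp only
    by_cases h : s u < s v
    · rw [if_pos h]
      simp only [Finset.mem_coe, Finset.mem_filter, Finset.mem_univ, true_and]
      exact ⟨h, hinv⟩
    · rw [if_neg h]
      simp only [Finset.mem_coe, Finset.mem_filter, Finset.mem_univ, true_and]
      refine ⟨huv, ?_⟩
      have hrev : s v < s u := by
        rcases lt_trichotomy (s u) (s v) with h1 | h1 | h1
        · exact absurd h1 h
        · exact absurd (s.injective h1) (ne_of_lt huv)
        · exact h1
      by_cases hua : u = a
      · by_cases hvb : v = b
        · exfalso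
          have e1 : s u = b := by rw [hua, hs]; exact Equiv.swap_apply_left a b
          have e2 : s v = a := by rw [hvb, hs]; exact Equiv.swap_apply_right a b
          rw [e1, e2] at hinv
          exact absurd hinv (not_lt.mpr hx.le)
        · have hva : v ≠ a := by rw [← hua]; exact (ne_of_gt huv)
          have e1 : s u = b := by rw [hua, hs]; exact Equiv.swap_apply_left a b
          have e2 : s v = v := by rw [hs]; exact Equiv.swap_apply_of_ne_of_ne hva hvb
          rw [e1, e2] at hinv
          rw [hua]
          exact lt_trans hinv hx
      · by_cases hub : u = b
        · exfalso
          have hva : v ≠ a := ne_of_gt (lt_trans hab (hub ▸ huv))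
          have hvb : v ≠ b := by rw [← hub]; exact ne_of_gt huv
          have e1 : s u = a := by rw [hub, hs]; exact Equiv.swap_apply_right a b
          have e2 : s v = v := by rw [hs]; exact Equiv.swap_apply_of_ne_of_ne hva hvb
          rw [e1, e2] at hrev
          have : b < a := lt_trans (hub ▸ huv) hrev
          exact absurd (lt_trans hab this) (lt_irrefl a)
        · have e1 : s u = u := by rw [hs]; exact Equiv.swap_apply_of_ne_of_ne hua hub
          rw [e1] at hrev hinv
          by_cases hva : v = a
          · exfalso
            have e2 : s v = b := by rw [hva, hs]; exact Equiv.swap_apply_left a b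
            rw [e2] at hrev
            have : v < u := lt_trans (hva ▸ hab) hrev
            exact absurd (lt_trans huv this) (lt_irrefl u)
          · by_cases hvb : v = b
            · have e2 : s v = a := by rw [hvb, hs]; exact Equiv.swap_apply_right a b
              rw [e2] at hinv
              rw [hvb]
              exact lt_trans hx hinv
            · exfalso
              have e2 : s v = v := by rw [hs]; exact Equiv.swap_apply_of_ne_of_ne hva hvb
              rw [e2] at hrev
              exact absurd huv (not_lt.mpr hrev.le)
  · rintro ⟨u, v⟩ hp ⟨u', v'⟩ hq h
    simp only [Finset.mem_coe, Finset.mem_filter, Finset.mem_univ, true_and] at hp hq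
    dsimp only at h
    by_cases h1 : s u < s v <;> by_cases h2 : s u' < s v'
    · rw [if_pos h1, if_pos h2] at h
      injection h with e1 e2
      exact Prod.ext (s.injective e1) (s.injective e2)
    · rw [if_pos h1, if_neg h2] at h
      injection h with e1 e2
      exfalso
      apply h2
      rw [← e1, ← e2, hs, Equiv.swap_apply_self, Equiv.swap_apply_self]
      exact hp.1
    · rw [if_neg h1, if_pos h2] at h
      injection h with e1 e2
      exfalso
      apply h1
      rw [e1, e2, hs, Equiv.swap_apply_self, Equiv.swap_apply_self]
      exact hq.1
    · rw [if_neg h1, if_neg h2] at h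
      exact h

lemma rk_anti_step {n : ℕ} (z : Perm (Fin n)) (a b : Fin n) (hab : a < b)
    (hz : z a < z b) (i j : ℕ) :
    rk (z * Equiv.swap a b) i j ≤ rk z i j := by
  classical
  set s := Equiv.swap a b with hs
  unfold rk
  apply Finset.card_le_card_of_injOn
      (fun u : Fin n => if (s u).val + 1 ≤ i then s u else u)
  · intro u hu
    replace hu : u ∈ Finset.univ.filter (fun u : Fin n => u.val + 1 ≤ i ∧ ((z * s) u).val + 1 ≤ j) := hu
    replace hu : u.val + 1 ≤ i ∧ (z (s u)).val + 1 ≤ j := (Finset.mem_filter.mp hu).2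
    obtain ⟨hui, huj⟩ := hu
    dsimp only
    by_cases h : (s u).val + 1 ≤ i
    · rw [if_pos h]
      simp only [Finset.mem_coe, Finset.mem_filter, Finset.mem_univ, true_and]
      exact ⟨h, huj⟩
    · rw [if_neg h]
      simp only [Finset.mem_coe, Finset.mem_filter, Finset.mem_univ, true_and]
      refine ⟨hui, ?_⟩
      by_cases hua : u = a
      · have e1 : s u = b := by rw [hua, hs]; exact Equiv.swap_apply_left a b
        rw [e1] at huj
        have : (z u).val < (z b).val := by rw [hua]; exact hz
        omega
      · by_cases hub : u = b
        · exfalso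
          have e1 : s u = a := by rw [hub, hs]; exact Equiv.swap_apply_right a b
          rw [e1] at h
          have : a.val < b.val := hab
          rw [hub] at hui
          omega
        · have e1 : s u = u := by rw [hs]; exact Equiv.swap_apply_of_ne_of_ne hua hub
          rw [e1] at huj
          exact huj
  · intro u hu v hv h
    simp only [Finset.mem_coe, Finset.mem_filter, Finset.mem_univ, true_and] at hu hv
    dsimp only at h
    by_cases h1 : (s u).val + 1 ≤ i <;> by_cases h2 : (s v).val + 1 ≤ i
    · rw [if_pos h1, if_pos h2] at h; exact s.injective h
    · rw [if_pos h1, if_neg h2] at h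
      exfalso; apply h2
      rw [← h, hs, Equiv.swap_apply_self]; exact hu.1
    · rw [if_neg h1, if_pos h2] at h
      exfalso; apply h1
      rw [h, hs, Equiv.swap_apply_self]; exact hv.1
    · rw [if_neg h1, if_neg h2] at h; exact h

lemma rk_anti_step' {n : ℕ} (z : Perm (Fin n)) (a b : Fin n) (hne : a ≠ b)
    (hlen : len z < len (z * Equiv.swap a b)) (i j : ℕ) :
    rk (z * Equiv.swap a b) i j ≤ rk z i j := by
  rcases hne.lt_or_gt with hab | hba
  · rcases lt_trichotomy (z a) (z b) with h1 | h1 | h1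
    · exact rk_anti_step z a b hab h1 i j
    · exact absurd (z.injective h1) hne
    · exact absurd hlen (not_lt.mpr (len_mul_swap_le z a b hab h1))
  · rw [Equiv.swap_comm] at hlen ⊢
    rcases lt_trichotomy (z b) (z a) with h1 | h1 | h1
    · exact rk_anti_step z b a hba h1 i j
    · exact absurd (z.injective h1) hne.symm
    · exact absurd hlen (not_lt.mpr (len_mul_swap_le z b a hba h1))

lemma rk_mono_bruhat {n : ℕ} {x w : Perm (Fin n)} (h : bruhatLE x w) (i j : ℕ) :
    rk w i j ≤ rk x i j := by
  induction h with
  | refl => exact le_rfl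
  | tail _ hstep ih =>
    obtain ⟨t, ⟨a, b, hne, rfl⟩, rfl, hlen⟩ := hstep
    exact le_trans (rk_anti_step' _ a b hne hlen i j) ih

lemma rk_submod {n : ℕ} (x : Perm (Fin n)) {i j i' j' : ℕ} (hi : i ≤ i') (hj : j ≤ j') :
    rk x i j' + rk x i' j ≤ rk x i' j' + rk x i j := by
  classical
  unfold rk
  set A := Finset.univ.filter (fun u : Fin n => u.val + 1 ≤ i ∧ (x u).val + 1 ≤ j') with hA
  set B := Finset.univ.filter (fun u : Fin n => u.val + 1 ≤ i' ∧ (x u).val + 1 ≤ j) with hB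
  have h1 : A ∪ B ⊆ Finset.univ.filter (fun u : Fin n => u.val + 1 ≤ i' ∧ (x u).val + 1 ≤ j') := by
    intro u hu
    rw [Finset.mem_union, hA, hB] at hu
    simp only [Finset.mem_filter, Finset.mem_univ, true_and] at hu ⊢
    omega
  have h2 : A ∩ B ⊆ Finset.univ.filter (fun u : Fin n => u.val + 1 ≤ i ∧ (x u).val + 1 ≤ j) := by
    intro u hu
    rw [Finset.mem_inter, hA, hB] at hu
    simp only [Finset.mem_filter, Finset.mem_univ, true_and] at hu ⊢
    omega
  calc A.card + B.card = (A ∪ B).card + (A ∩ B).card :=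
        (Finset.card_union_add_card_inter A B).symm
    _ ≤ _ := add_le_add (Finset.card_le_card h1) (Finset.card_le_card h2)

lemma dOf_nonneg {n : ℕ} (x : Perm (Fin n)) {p q : ℕ × ℕ} (h : SCmp p q) :
    0 ≤ dOf x p q := by
  unfold dOf
  rcases h with ⟨h1, h2⟩ | ⟨h1, h2⟩
  · have := rk_submod x h1.le h2.le
    push_cast
    omega
  · have := rk_submod x h1.le h2.le
    push_cast
    omega

def corners (p q : ℕ × ℕ) : Set (ℕ × ℕ) := {(p.1, q.2), (q.1, p.2)}

theorem stmt2 (n : ℕ) (x w : Equiv.Perm (Fin n)) (hxw : bruhatLE x w)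
    (i j i' j' : ℕ) (hin : i ≤ n) (hjn : j ≤ n) (hin' : i' ≤ n) (hjn' : j' ≤ n)
    (hcmp : SCmp (i, j) (i', j'))
    (hp : rk x i j = rk w i j) (hq : rk x i' j' = rk w i' j')
    (hd : dOf w (i, j) (i', j') = 0) :
    dOf x (i, j) (i', j') = 0 ∧ rk x i j' = rk w i j' ∧ rk x i' j = rk w i' j := by
  have hA := rk_mono_bruhat hxw i j'
  have hB := rk_mono_bruhat hxw i' j
  have hnn := dOf_nonneg x hcmp
  unfold dOf at hd hnn ⊢
  dsimp only at hd hnn ⊢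
  omega
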